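/- For all n ≥ i > j ≥ 1 and λ_i − λ_j ≤ r < λ_i, one has (ad* e_{i−1,j;λ_i−r−1})(f) = −f_{j,i;r} if j = 1, and (ad* e_{i−1,j;λ_i−r−1})(f) = f_{j−1,i−1;λ_j−λ_i+r} − f_{j,i;r} if j > 1, where f_{a,b;t} is interpreted as 0 whenever t lies outside the range s_{a,b} ≤ t < λ_b. -/

import Mathlib

noncomputable section

attribute [local instance 100] LieRing.ofAssociativeRing

open scoped BigOperators

/-- The matrix of the nilpotent `e` determined by the filling `row, col` of the diagram:
`e = Σ e_{h,k}` over pairs of boxes in the same row with `col k = col h + 1`. -/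
def eNil (F : Type*) [Field F] {n N : ℕ} (row : Fin N → Fin n) (col : Fin N → ℕ) :
    Matrix (Fin N) (Fin N) F :=
  ∑ h : Fin N, ∑ k : Fin N,
    if row h = row k ∧ col k = col h + 1 then Matrix.single h k (1 : F) else 0

/-- The shift `s_{i,j} = λ_j - min(λ_i, λ_j)`. -/
def sft {n : ℕ} (lam : Fin n → ℕ) (i j : Fin n) : ℕ := lam j - min (lam i) (lam j)

/-- The element `e_{i,j;r}` of the centralizer, as a matrix:
`Σ e_{h,k}` over boxes `h` in row `i` and `k` in row `j` with `col k - col h = r`. -/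
def eE (F : Type*) [Field F] {n N : ℕ} (row : Fin N → Fin n) (col : Fin N → ℕ)
    (i j : Fin n) (r : ℕ) : Matrix (Fin N) (Fin N) F :=
  ∑ h : Fin N, ∑ k : Fin N,
    if row h = i ∧ row k = j ∧ col k = col h + r then Matrix.single h k (1 : F) else 0

/-- The centralizer `g_e` of `e` in `gl_N(F)`, as a Lie subalgebra. -/
def gCent (F : Type*) [Field F] {N : ℕ} (e : Matrix (Fin N) (Fin N) F) :
    LieSubalgebra F (Matrix (Fin N) (Fin N) F) where
  carrier := {x | x * e = e * x}
  add_mem' := by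
    intro x y hx hy
    simp only [Set.mem_setOf_eq] at *
    rw [add_mul, mul_add, hx, hy]
  zero_mem' := by simp
  smul_mem' := by
    intro c x hx
    simp only [Set.mem_setOf_eq] at *
    rw [Matrix.smul_mul, Matrix.mul_smul, hx]
  lie_mem' := by
    intro x y hx hy
    simp only [Set.mem_setOf_eq, Ring.lie_def] at *
    rw [sub_mul, mul_sub, mul_assoc, hy, ← mul_assoc, hx, mul_assoc, mul_assoc, hx,
      ← mul_assoc, ← mul_assoc, hy, mul_assoc, mul_assoc]

/-- The sum of the `t` largest parts of `λ` (recall `λ_1 ≤ ⋯ ≤ λ_n`, zero-indexed). -/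
def topSum {n : ℕ} (lam : Fin n → ℕ) (t : ℕ) : ℕ :=
  ∑ i ∈ Finset.univ.filter (fun i : Fin n => n - t ≤ (i : ℕ)), lam i

/-- The invariant degree `d_r`: the least `d` with `λ_n + ⋯ + λ_{n-d+1} ≥ r`. -/
def invDeg {n : ℕ} (lam : Fin n → ℕ) (r : ℕ) : ℕ :=
  sInf {d : ℕ | r ≤ topSum lam d}

/-- The index set for the basis `{e_{i,j;r}}` of `g_e`: triples `(i,j,r)` with
`s_{i,j} ≤ r < λ_j`. -/
def BoxIdx {n : ℕ} (lam : Fin n → ℕ) : Type :=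
  {t : Fin n × Fin n × ℕ // sft lam t.1 t.2.1 ≤ t.2.2 ∧ t.2.2 < lam t.2.1}

/-- The column determinant of a matrix with (possibly noncommutative) ring entries:
`cdet A = Σ_w sgn(w) a_{w1,1} ⋯ a_{wn,n}`. -/
def cdet {R : Type*} [Ring R] {m : ℕ} (A : Matrix (Fin m) (Fin m) R) : R :=
  ∑ w : Equiv.Perm (Fin m), ((Equiv.Perm.sign w : ℤˣ) : ℤ) • (List.ofFn fun q => A (w q) q).prod

section UEA

variable (F : Type*) [Field F] {n N : ℕ} (lam : Fin n → ℕ)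
  (row : Fin N → Fin n) (col : Fin N → ℕ)
  (eB : Fin n → Fin n → ℕ → ↥(gCent F (eNil F row col)))

/-- `ẽ_{i,j;r} = e_{i,j;r} - δ_{r,0} δ_{i,j} (i-1) λ_i` inside `U(g_e)`
(zero-indexed: the scalar is `i·λ_i` for `i : Fin n`). -/
def eTilde (i j : Fin n) (r : ℕ) :
    UniversalEnvelopingAlgebra F ↥(gCent F (eNil F row col)) :=
  UniversalEnvelopingAlgebra.ι F (eB i j r) -
    (if r = 0 ∧ i = j then (((i : ℕ) * lam i : ℕ) : F) • 1 else 0)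

/-- The column determinant `cdet(μ)` in `U(g_e)` attached to `μ ⊆ λ`. -/
def cdetMu (μ : Fin n → Fin (N + 1)) :
    UniversalEnvelopingAlgebra F ↥(gCent F (eNil F row col)) :=
  ∑ w : Equiv.Perm (Fin (Finset.univ.filter (fun i : Fin n => (μ i : ℕ) ≠ 0)).card),
    ((Equiv.Perm.sign w : ℤˣ) : ℤ) •
      (List.ofFn fun j =>
        eTilde F lam row col eB
          (((Finset.univ.filter (fun i : Fin n => (μ i : ℕ) ≠ 0)).orderIsoOfFin rfl (w j)) : Fin n)
          (((Finset.univ.filter (fun i : Fin n => (μ i : ℕ) ≠ 0)).orderIsoOfFin rfl j) : Fin n)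
          ((μ (((Finset.univ.filter (fun i : Fin n => (μ i : ℕ) ≠ 0)).orderIsoOfFin rfl j) : Fin n) : ℕ) - 1)).prod

/-- The element `z_r = Σ_{μ ⊆ λ, |μ| = r, ℓ(μ) = d_r} cdet(μ)` of `U(g_e)`. -/
def zEl (r : ℕ) : UniversalEnvelopingAlgebra F ↥(gCent F (eNil F row col)) :=
  ∑ μ ∈ Finset.univ.filter (fun μ : Fin n → Fin (N + 1) =>
      (∀ i, (μ i : ℕ) ≤ lam i) ∧ (∑ i, (μ i : ℕ)) = r ∧
        (Finset.univ.filter (fun i : Fin n => (μ i : ℕ) ≠ 0)).card = invDeg lam r),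
    cdetMu F lam row col eB μ

end UEA

section Sym

variable (F : Type*) [Field F] {n : ℕ} (lam : Fin n → ℕ)

/-- The generator `e_{i,j;r}` of the symmetric algebra `S(g_e)`, modelled as the variable
`X (i,j,r)` of a polynomial ring (and `0` for indices out of range, which never occur). -/
def xE (i j : Fin n) (r : ℕ) : MvPolynomial (BoxIdx lam) F :=
  if h : sft lam i j ≤ r ∧ r < lam j then MvPolynomial.X ⟨(i, j, r), h⟩ else 0

/-- The summand of `x_r` attached to `μ ⊆ λ`:
`Σ_w sgn(w) e_{i_{w1},i_1;μ_{i_1}-1} ⋯ e_{i_{wd},i_d;μ_{i_d}-1}` in `S(g_e)`. -/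
def xcdetMu (N : ℕ) (μ : Fin n → Fin (N + 1)) : MvPolynomial (BoxIdx lam) F :=
  ∑ w : Equiv.Perm (Fin (Finset.univ.filter (fun i : Fin n => (μ i : ℕ) ≠ 0)).card),
    ((Equiv.Perm.sign w : ℤˣ) : ℤ) •
      ∏ j, xE F lam
          (((Finset.univ.filter (fun i : Fin n => (μ i : ℕ) ≠ 0)).orderIsoOfFin rfl (w j)) : Fin n)
          (((Finset.univ.filter (fun i : Fin n => (μ i : ℕ) ≠ 0)).orderIsoOfFin rfl j) : Fin n)
          ((μ (((Finset.univ.filter (fun i : Fin n => (μ i : ℕ) ≠ 0)).orderIsoOfFin rfl j) : Fin n) : ℕ) - 1)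

/-- The invariant `x_r ∈ S(g_e)`. -/
def xEl (N : ℕ) (r : ℕ) : MvPolynomial (BoxIdx lam) F :=
  ∑ μ ∈ Finset.univ.filter (fun μ : Fin n → Fin (N + 1) =>
      (∀ i, (μ i : ℕ) ≤ lam i) ∧ (∑ i, (μ i : ℕ)) = r ∧
        (Finset.univ.filter (fun i : Fin n => (μ i : ℕ) ≠ 0)).card = invDeg lam r),
    xcdetMu F lam N μ

end Sym

section Dual

variable (F : Type*) [Field F] {n N : ℕ} (lam : Fin n → ℕ)
  (row : Fin N → Fin n) (col : Fin N → ℕ)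
  (bE : Module.Basis (BoxIdx lam) F ↥(gCent F (eNil F row col)))

/-- The coadjoint action `(ad* x)(ξ) = -ξ ∘ (ad x)` of `g_e` on `g_e^*`. -/
def coad (x : ↥(gCent F (eNil F row col)))
    (ξ : Module.Dual F ↥(gCent F (eNil F row col))) :
    Module.Dual F ↥(gCent F (eNil F row col)) :=
  -(ξ ∘ₗ (LieAlgebra.ad F ↥(gCent F (eNil F row col)) x : _ →ₗ[F] _))

/-- The dual basis vector `f_{i,j;t}` of `g_e^*`, with the convention that it is `0`
for `t` outside the range `s_{i,j} ≤ t < λ_j`. -/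
def fHat (i j : Fin n) (t : ℤ) : Module.Dual F ↥(gCent F (eNil F row col)) :=
  if h : (sft lam i j : ℤ) ≤ t ∧ t < (lam j : ℤ) then
    bE.coord ⟨(i, j, t.toNat), ⟨show sft lam i j ≤ t.toNat by omega, show t.toNat < lam j by omega⟩⟩ else 0

/-- The basis vector `e_{i,j;r}` of `g_e`, with the convention that it is `0` for `r`
outside the range `s_{i,j} ≤ r < λ_j`. -/
def eHat (i j : Fin n) (r : ℕ) : ↥(gCent F (eNil F row col)) :=
  if h : sft lam i j ≤ r ∧ r < lam j then bE ⟨(i, j, r), h⟩ else 0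

/-- The functional `f = f_{1,2;λ_2-1} + f_{2,3;λ_3-1} + ⋯ + f_{n-1,n;λ_n-1} ∈ g_e^*`,
described by its values on the basis `{e_{i,j;r}}`. -/
def fReg : Module.Dual F ↥(gCent F (eNil F row col)) :=
  bE.constr F fun b : BoxIdx lam =>
    if (b.1.2.1 : ℕ) = (b.1.1 : ℕ) + 1 ∧ b.1.2.2 = lam b.1.2.1 - 1 then (1 : F) else 0

/-- The point `f + Σ_{j,t} a_{j,t} f_{n,j;t}` of the slice `S = f + V`, described by its
values on the basis `{e_{i,j;r}}`; here `a j t` is the coordinate `a_{j+1,t}` (rows of the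
diagram being zero-indexed). -/
def slicePt (a : ℕ → ℕ → F) : Module.Dual F ↥(gCent F (eNil F row col)) :=
  bE.constr F fun b : BoxIdx lam =>
    (if (b.1.2.1 : ℕ) = (b.1.1 : ℕ) + 1 ∧ b.1.2.2 = lam b.1.2.1 - 1 then (1 : F) else 0) +
      (if (b.1.1 : ℕ) = n - 1 then a (b.1.2.1 : ℕ) b.1.2.2 else 0)

/-- The subspace `V ⊆ g_e^*` spanned by the `f_{n,j;t}`, `0 ≤ t < λ_j`. -/
def sliceV : Submodule F (Module.Dual F ↥(gCent F (eNil F row col))) :=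
  Submodule.span F {φ | ∃ b : BoxIdx lam, (b.1.1 : ℕ) = n - 1 ∧ φ = bE.coord b}

/-- Restriction of polynomial functions on `g_e^*` to the slice `S = f + V`, as an
algebra homomorphism onto the coordinate ring of `S ≅ 𝔸^N` (with coordinates `a_{j,t}`,
`0 ≤ t < λ_j`, indexed by `Σ_j Fin (λ_j)`). -/
def restrictS : MvPolynomial (BoxIdx lam) F →ₐ[F] MvPolynomial ((j : Fin n) × Fin (lam j)) F :=
  MvPolynomial.aeval fun b : BoxIdx lam =>
    MvPolynomial.C
        (if (b.1.2.1 : ℕ) = (b.1.1 : ℕ) + 1 ∧ b.1.2.2 = lam b.1.2.1 - 1 then (1 : F) else 0) +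
      (if (b.1.1 : ℕ) = n - 1 then MvPolynomial.X ⟨b.1.2.1, ⟨b.1.2.2, b.2.2⟩⟩ else 0)

end Dual


section CoadHelpers

set_option linter.unusedSectionVars false

variable {F : Type*} {n N : ℕ}

private lemma box_inj {row : Fin N → Fin n} {col : Fin N → ℕ}
    (horder : ∀ k l : Fin N, k < l ↔ (row k < row l ∨ (row k = row l ∧ col k < col l)))
    {h k : Fin N} (h1 : row h = row k) (h2 : col h = col k) : h = k := by
  rcases lt_trichotomy h k with hlt | he | hgt
  · rcases (horder h k).1 hlt with h' | ⟨_, h'⟩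
    · exact absurd h1 (ne_of_lt h')
    · omega
  · exact he
  · rcases (horder k h).1 hgt with h' | ⟨_, h'⟩
    · exact absurd h1.symm (ne_of_lt h')
    · omega

private lemma eE_apply [Field F] (row : Fin N → Fin n) (col : Fin N → ℕ)
    (i j : Fin n) (r : ℕ) (a b : Fin N) :
    eE F row col i j r a b = if row a = i ∧ row b = j ∧ col b = col a + r then 1 else 0 := by
  classical
  have ent : ∀ h k : Fin N,
      ((if row h = i ∧ row k = j ∧ col k = col h + r then
          Matrix.single h k (1 : F) else 0)) a b
        = if (h = a ∧ k = b) ∧ (row h = i ∧ row k = j ∧ col k = col h + r) then 1 else 0 := by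
    intro h k
    by_cases hP : row h = i ∧ row k = j ∧ col k = col h + r
    · by_cases hab : h = a ∧ k = b
      · obtain ⟨rfl, rfl⟩ := hab
        simp [hP, Matrix.single]
      · rw [if_pos hP, if_neg (by tauto)]
        exact Matrix.single_apply_of_ne _ _ _ _ _ hab
    · simp [hP]
  unfold eE
  simp only [Matrix.sum_apply, ent]
  rw [Finset.sum_eq_single a]
  · rw [Finset.sum_eq_single b]
    · simp
    · intro k _ hk; simp [hk]
    · simp
  · intro h _ hh; exact Finset.sum_eq_zero fun k _ => by simp [hh]
  · simp

variable [Field F] {row : Fin N → Fin n} {col : Fin N → ℕ}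

private lemma eE_mul_ne (i j j' l : Fin n) (R s : ℕ) (hjj : j ≠ j') :
    eE F row col i j R * eE F row col j' l s = 0 := by
  ext a b
  rw [Matrix.mul_apply, Matrix.zero_apply]
  apply Finset.sum_eq_zero
  intro k _
  rw [eE_apply, eE_apply]
  by_cases h1 : row a = i ∧ row k = j ∧ col k = col a + R
  · rw [if_pos h1, if_neg, mul_zero]
    rintro ⟨hk, -⟩
    exact hjj (h1.2.1 ▸ hk ▸ rfl)
  · rw [if_neg h1, zero_mul]

private lemma eE_mul_eq {lam : Fin n → ℕ}
    (hcol : ∀ k, 1 ≤ col k ∧ col k ≤ lam (row k))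
    (horder : ∀ k l : Fin N, k < l ↔ (row k < row l ∨ (row k = row l ∧ col k < col l)))
    (hsurj : ∀ (i : Fin n) (c : ℕ), 1 ≤ c → c ≤ lam i → ∃ k, row k = i ∧ col k = c)
    (i j l : Fin n) (R s : ℕ) (hs : lam l ≤ lam j + s) :
    eE F row col i j R * eE F row col j l s = eE F row col i l (R + s) := by
  ext a b
  rw [Matrix.mul_apply, eE_apply]
  by_cases H : row a = i ∧ row b = l ∧ col b = col a + (R + s)
  · rw [if_pos H]
    obtain ⟨k, hk1, hk2⟩ := hsurj j (col a + R) (by have := (hcol a).1; omega)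
      (by have h1 := (hcol b).2; rw [H.2.1] at h1; omega)
    rw [Finset.sum_eq_single k]
    · rw [eE_apply, eE_apply, if_pos ⟨H.1, hk1, hk2⟩, if_pos ⟨hk1, H.2.1, by omega⟩, mul_one]
    · intro m _ hm
      rw [eE_apply, eE_apply]
      by_cases h1 : row a = i ∧ row m = j ∧ col m = col a + R
      · exact absurd (box_inj horder (h1.2.1.trans hk1.symm) (h1.2.2.trans hk2.symm)) hm
      · rw [if_neg h1, zero_mul]
    · simp
  · rw [if_neg H]
    apply Finset.sum_eq_zero
    intro k _
    rw [eE_apply, eE_apply]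
    by_cases h1 : row a = i ∧ row k = j ∧ col k = col a + R
    · rw [if_pos h1, if_neg, one_mul]
      rintro ⟨-, h3, h4⟩
      exact H ⟨h1.1, h3, by omega⟩
    · rw [if_neg h1, zero_mul]

private lemma eE_zero {lam : Fin n → ℕ}
    (hcol : ∀ k, 1 ≤ col k ∧ col k ≤ lam (row k))
    (p q : Fin n) (t : ℕ) (ht : lam q ≤ t) :
    eE F row col p q t = 0 := by
  ext a b
  rw [eE_apply, Matrix.zero_apply, if_neg]
  rintro ⟨-, h2, h3⟩
  have h4 := (hcol b).2
  have h5 := (hcol a).1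
  rw [h2] at h4
  omega

variable {lam : Fin n → ℕ}

private lemma coe_eHat
    (hcol : ∀ k, 1 ≤ col k ∧ col k ≤ lam (row k))
    (bE : Module.Basis (BoxIdx lam) F ↥(gCent F (eNil F row col)))
    (hbE : ∀ b : BoxIdx lam,
      (↑(bE b) : Matrix (Fin N) (Fin N) F) = eE F row col b.1.1 b.1.2.1 b.1.2.2)
    (p q : Fin n) (t : ℕ) (ht : sft lam p q ≤ t) :
    ((eHat F lam row col bE p q t : ↥(gCent F (eNil F row col))) : Matrix (Fin N) (Fin N) F)
      = eE F row col p q t := by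
  unfold eHat
  split_ifs with h
  · exact hbE _
  · have hq : lam q ≤ t := by
      by_contra h'
      exact h ⟨ht, by omega⟩
    rw [eE_zero hcol p q t hq]
    simp

private lemma bracket_eq
    (hcol : ∀ k, 1 ≤ col k ∧ col k ≤ lam (row k))
    (horder : ∀ k l : Fin N, k < l ↔ (row k < row l ∨ (row k = row l ∧ col k < col l)))
    (hsurj : ∀ (i : Fin n) (c : ℕ), 1 ≤ c → c ≤ lam i → ∃ k, row k = i ∧ col k = c)
    (bE : Module.Basis (BoxIdx lam) F ↥(gCent F (eNil F row col)))
    (hbE : ∀ b : BoxIdx lam,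
      (↑(bE b) : Matrix (Fin N) (Fin N) F) = eE F row col b.1.1 b.1.2.1 b.1.2.2)
    (I J p q : Fin n) (R s : ℕ)
    (h1 : sft lam I J ≤ R ∧ R < lam J) (h2 : sft lam p q ≤ s ∧ s < lam q)
    (hIJ : lam J ≤ lam I) :
    ⁅bE ⟨(I, J, R), h1⟩, bE ⟨(p, q, s), h2⟩⁆ =
      (if J = p then eHat F lam row col bE I q (R + s) else 0) -
      (if q = I then eHat F lam row col bE p J (R + s) else 0) := by
  have hs1 := h2.1
  have hs2 := h2.2
  have hR1 := h1.1
  have hR2 := h1.2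
  simp only [sft] at hs1 hR1
  rw [Subtype.ext_iff]
  erw [LieSubalgebra.coe_bracket, Ring.lie_def, hbE, hbE, AddSubgroupClass.coe_sub]
  congr 1
  · by_cases hJp : J = p
    · subst hJp
      rw [if_pos rfl, eE_mul_eq hcol horder hsurj I J q R s (by omega),
        coe_eHat hcol bE hbE I q (R + s) (by simp only [sft]; omega)]
    · rw [if_neg hJp, eE_mul_ne I J p q R s hJp]
      simp
  · by_cases hqI : q = I
    · subst hqI
      rw [if_pos rfl, eE_mul_eq hcol horder hsurj p q J s R (by omega),
        coe_eHat hcol bE hbE p J (R + s) (by simp only [sft]; omega), Nat.add_comm s R]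
    · rw [if_neg hqI, eE_mul_ne p q I J s R hqI]
      simp

private lemma fReg_eHat
    (bE : Module.Basis (BoxIdx lam) F ↥(gCent F (eNil F row col)))
    (p q : Fin n) (t : ℕ) :
    fReg F lam row col bE (eHat F lam row col bE p q t) =
      if (sft lam p q ≤ t ∧ t < lam q) ∧ ((q : ℕ) = (p : ℕ) + 1 ∧ t = lam q - 1)
        then 1 else 0 := by
  unfold eHat fReg
  split_ifs with h h2 h2
  · erw [Module.Basis.constr_basis]
    simp only [if_pos h2.2]
  · erw [Module.Basis.constr_basis]
    rw [if_neg (fun hc => h2 ⟨h, hc⟩)]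
  · exact absurd h2.1 h
  · simp

private lemma fHat_apply
    (bE : Module.Basis (BoxIdx lam) F ↥(gCent F (eNil F row col)))
    (p q : Fin n) (t : ℤ) (b : BoxIdx lam) :
    fHat F lam row col bE p q t (bE b) =
      if b.1.1 = p ∧ b.1.2.1 = q ∧ ((b.1.2.2 : ℕ) : ℤ) = t then 1 else 0 := by
  classical
  obtain ⟨⟨p', q', s'⟩, hs⟩ := b
  simp only [] at hs ⊢
  unfold fHat
  split_ifs with h h2 h2
  · erw [Module.Basis.coord_apply, Module.Basis.repr_self_apply, if_pos]
    refine Subtype.ext ?_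
    obtain ⟨rfl, rfl, h3⟩ := h2
    simp only [Prod.mk.injEq, true_and]
    omega
  · erw [Module.Basis.coord_apply, Module.Basis.repr_self_apply, if_neg]
    intro heq
    apply h2
    erw [Subtype.mk.injEq, Prod.mk.injEq, Prod.mk.injEq] at heq
    obtain ⟨e1, e2, e3⟩ := heq
    have ht0 := h.1
    exact ⟨e1, e2, by omega⟩
  · exfalso
    apply h
    obtain ⟨rfl, rfl, h3⟩ := h2
    constructor <;> omega
  · simp

end CoadHelpers
set_option maxHeartbeats 1600000 in
theorem statement16
    {F : Type*} [Field F] [IsAlgClosed F] [CharZero F] {n N : ℕ} (lam : Fin n → ℕ)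
    (hpos : ∀ i, 0 < lam i) (hmono : Monotone lam) (hsum : ∑ i, lam i = N)
    (row : Fin N → Fin n) (col : Fin N → ℕ)
    (hcol : ∀ k, 1 ≤ col k ∧ col k ≤ lam (row k))
    (horder : ∀ k l : Fin N, k < l ↔ (row k < row l ∨ (row k = row l ∧ col k < col l)))
    (hsurj : ∀ (i : Fin n) (c : ℕ), 1 ≤ c → c ≤ lam i → ∃ k, row k = i ∧ col k = c)
    (bE : Module.Basis (BoxIdx lam) F ↥(gCent F (eNil F row col)))
    (hbE : ∀ b : BoxIdx lam,
      (↑(bE b) : Matrix (Fin N) (Fin N) F) = eE F row col b.1.1 b.1.2.1 b.1.2.2)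
    (i j : Fin n) (hji : (j : ℕ) < (i : ℕ)) (r : ℕ)
    (hr1 : lam i - lam j ≤ r) (hr2 : r < lam i) :
    coad F row col
        (eHat F lam row col bE ⟨(i : ℕ) - 1, by have := i.isLt; omega⟩ j (lam i - r - 1))
        (fReg F lam row col bE) =
      if (j : ℕ) = 0 then -fHat F lam row col bE j i (r : ℤ)
      else
        fHat F lam row col bE ⟨(j : ℕ) - 1, by have := j.isLt; omega⟩
            ⟨(i : ℕ) - 1, by have := i.isLt; omega⟩
            ((lam j : ℤ) - (lam i : ℤ) + (r : ℤ)) -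
          fHat F lam row col bE j i (r : ℤ) := by
  classical
  have hii : 1 ≤ (i : ℕ) := by omega
  have hI : sft lam (⟨(i : ℕ) - 1, by have := i.isLt; omega⟩ : Fin n) j ≤ lam i - r - 1 ∧
      lam i - r - 1 < lam j := by
    have hjI : lam j ≤ lam ⟨(i : ℕ) - 1, by have := i.isLt; omega⟩ :=
      hmono (by rw [Fin.le_def]; exact (show (j : ℕ) ≤ (i : ℕ) - 1 by omega))
    have := hpos j
    constructor
    · simp only [sft]; omega
    · omega
  have hjI : lam j ≤ lam ⟨(i : ℕ) - 1, by have := i.isLt; omega⟩ :=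
    hmono (by rw [Fin.le_def]; exact (show (j : ℕ) ≤ (i : ℕ) - 1 by omega))
  have hIi : lam (⟨(i : ℕ) - 1, by have := i.isLt; omega⟩ : Fin n) ≤ lam i :=
    hmono (by rw [Fin.le_def]; exact Nat.sub_le _ _)
  have hx : eHat F lam row col bE ⟨(i : ℕ) - 1, by have := i.isLt; omega⟩ j (lam i - r - 1) =
      bE ⟨(⟨(i : ℕ) - 1, by have := i.isLt; omega⟩, j, lam i - r - 1), hI⟩ := by
    exact dif_pos hI
  refine Module.Basis.ext bE fun b => ?_
  obtain ⟨⟨p, q, s⟩, hs⟩ := b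
  simp only [coad, LinearMap.neg_apply, LinearMap.comp_apply, LieAlgebra.ad_apply, hx]
  rw [bracket_eq hcol horder hsurj bE hbE _ j p q (lam i - r - 1) s hI hs hjI]
  rw [map_sub, apply_ite (fReg F lam row col bE), apply_ite (fReg F lam row col bE),
    fReg_eHat, fReg_eHat]
  have hz2 : (fReg F lam row col bE) (0 : ↥(gCent F (eNil F row col))) = (0 : F) :=
    LinearMap.map_zero _
  rw [hz2]
  have hpj := hpos j
  have hpi := hpos i
  have goal2 : (if j = p then
        (if (sft lam (⟨(i : ℕ) - 1, by have := i.isLt; omega⟩ : Fin n) q ≤ lam i - r - 1 + s ∧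
              lam i - r - 1 + s < lam q) ∧
            (q : ℕ) = ((⟨(i : ℕ) - 1, by have := i.isLt; omega⟩ : Fin n) : ℕ) + 1 ∧
              lam i - r - 1 + s = lam q - 1 then (1 : F) else 0)
        else (0 : F)) =
      (if p = j ∧ q = i ∧ ((s : ℕ) : ℤ) = (r : ℤ) then 1 else 0) := by
    by_cases hp : j = p
    · rw [if_pos hp]
      by_cases hq : q = i
      · have hlq : lam q = lam i := congrArg lam hq
        have hqv : (q : ℕ) = (i : ℕ) := congrArg Fin.val hq
        refine if_congr ⟨fun hC => ⟨hp.symm, hq, ?_⟩, fun hC => ?_⟩ rfl rfl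
        · have h4 := hC.2.2
          omega
        · have h4 := hC.2.2
          refine ⟨⟨?_, ?_⟩, ?_, ?_⟩ <;> (try simp only [sft, Fin.val_mk]) <;> omega
      · have hC1 : ¬((sft lam (⟨(i : ℕ) - 1, by have := i.isLt; omega⟩ : Fin n) q ≤
              lam i - r - 1 + s ∧ lam i - r - 1 + s < lam q) ∧
            (q : ℕ) = ((⟨(i : ℕ) - 1, by have := i.isLt; omega⟩ : Fin n) : ℕ) + 1 ∧
              lam i - r - 1 + s = lam q - 1) := by
          rintro ⟨-, hval, -⟩
          simp only [Fin.val_mk] at hval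
          exact hq (Fin.ext (by omega))
        rw [if_neg hC1, if_neg (fun h => hq h.2.1)]
    · rw [if_neg hp, if_neg (fun h => hp h.1.symm)]
  by_cases hj0 : (j : ℕ) = 0
  · erw [if_pos hj0, LinearMap.neg_apply, fHat_apply]
    dsimp only
    conv_rhs => rw [← zero_sub]
    rw [neg_sub]
    refine congrArg₂ (· - ·) ?_ ?_
    · split_ifs with h1 h2
      · exfalso
        have h3 := h2.2.1
        omega
      · rfl
      · rfl
    · exact goal2
  · erw [if_neg hj0, LinearMap.sub_apply, fHat_apply, fHat_apply]
    dsimp only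
    rw [neg_sub]
    have hjm : lam (⟨(j : ℕ) - 1, by have := j.isLt; omega⟩ : Fin n) ≤ lam j :=
      hmono (by rw [Fin.le_def]; exact Nat.sub_le _ _)
    have hjp := hpos (⟨(j : ℕ) - 1, by have := j.isLt; omega⟩ : Fin n)
    refine congrArg₂ (· - ·) ?_ ?_
    · by_cases hq : q = (⟨(i : ℕ) - 1, by have := i.isLt; omega⟩ : Fin n)
      · rw [if_pos hq]
        by_cases hp : p = (⟨(j : ℕ) - 1, by have := j.isLt; omega⟩ : Fin n)
        · have hlp : lam p = lam (⟨(j : ℕ) - 1, by have := j.isLt; omega⟩ : Fin n) :=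
            congrArg lam hp
          have hpv : (p : ℕ) = (j : ℕ) - 1 := congrArg Fin.val hp
          refine if_congr ⟨fun hC => ⟨hp, hq, ?_⟩, fun hC => ?_⟩ rfl rfl
          · have h4 := hC.2.2
            omega
          · have h4 := hC.2.2
            refine ⟨⟨?_, ?_⟩, ?_, ?_⟩ <;> (try simp only [sft, hlp, Fin.val_mk]) <;> omega
        · have hC2 : ¬((sft lam p j ≤ lam i - r - 1 + s ∧ lam i - r - 1 + s < lam j) ∧
              (j : ℕ) = (p : ℕ) + 1 ∧ lam i - r - 1 + s = lam j - 1) := by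
            rintro ⟨-, hval, -⟩
            exact hp (Fin.ext (by simp only [Fin.val_mk]; omega))
          rw [if_neg hC2, if_neg (fun h => hp h.1)]
      · rw [if_neg hq, if_neg (fun h => hq h.2.1)]
    · exact goal2
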